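/- Let (η(u))_{u∈ℤ} be i.i.d. uniform(0,1). For any ε > 0 and any fixed v ∈ ℤ, the event that v is two-sidedly ε-flat, i.e., that (1/(m+n+1))·∑_{u=v-m}^{v+n} η(u) ∈ [1/2 - ε, 1/2 + ε] for all m, n ≥ 0, has positive probability. -/

import Mathlib

open MeasureTheory ProbabilityTheory Set Filter Finset

/-- From `T n / n → 0` we get a tail index `K` beyond which all increments
`T n - T j` are small compared to `n+1`. -/
lemma tail_flat_of_tendsto (T : ℕ → ℝ) (δ : ℝ) (hδ : 0 < δ)
    (h : Tendsto (fun n : ℕ => T n / n) atTop (nhds 0)) :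
    ∃ K : ℕ, ∀ j ≥ K, ∀ n > j, |T n - T j| ≤ δ * (n + 1) := by
  have h2 : ∀ᶠ n : ℕ in atTop, |T n / n| ≤ δ / 2 := by
    have := h.eventually (Metric.ball_mem_nhds (0 : ℝ) (by positivity : (0:ℝ) < δ/2))
    filter_upwards [this] with n hn
    rw [Real.dist_eq, sub_zero] at hn
    exact le_of_lt hn
  obtain ⟨K0, hK0⟩ := h2.exists_forall_of_atTop
  refine ⟨max K0 1, fun j hj n hn => ?_⟩
  have hj1 : 1 ≤ j := le_trans (le_max_right _ _) hj
  have habs : ∀ i : ℕ, max K0 1 ≤ i → |T i| ≤ δ / 2 * i := by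
    intro i hi
    have hiK : K0 ≤ i := le_trans (le_max_left _ _) hi
    have hi1 : (1:ℝ) ≤ i := by exact_mod_cast le_trans (le_max_right _ _) hi
    have := hK0 i hiK
    rw [abs_div, div_le_iff₀ (by positivity)] at this
    simpa [abs_of_nonneg (by positivity : (0:ℝ) ≤ (i:ℝ))] using this
  have h1 := habs j hj
  have h2' := habs n (le_trans hj (le_of_lt hn))
  have hjn : (j : ℝ) ≤ n := by exact_mod_cast le_of_lt hn
  calc |T n - T j| ≤ |T n| + |T j| := abs_sub _ _
    _ ≤ δ / 2 * n + δ / 2 * j := add_le_add h2' h1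
    _ ≤ δ * (n + 1) := by nlinarith [hδ.le]

/-- A random variable with uniform law on `[0,1]` is integrable. -/
lemma unif_integrable {Ω : Type*} [MeasurableSpace Ω] {P : Measure Ω} {f : Ω → ℝ}
    (hm : Measurable f) (h : Measure.map f P = volume.restrict (Icc (0:ℝ) 1)) :
    Integrable f P := by
  have h1 : Integrable id (Measure.map f P) := by
    rw [h]
    exact (continuous_id.continuousOn).integrableOn_compact isCompact_Icc
  exact (integrable_map_measure aestronglyMeasurable_id hm.aemeasurable).1 h1

/-- A random variable with uniform law on `[0,1]` has mean `1/2`. -/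
lemma unif_integral {Ω : Type*} [MeasurableSpace Ω] {P : Measure Ω} {f : Ω → ℝ}
    (hm : Measurable f) (h : Measure.map f P = volume.restrict (Icc (0:ℝ) 1)) :
    ∫ ω, f ω ∂P = 1 / 2 := by
  have h1 : ∫ ω, f ω ∂P = ∫ x, id x ∂(Measure.map f P) := by
    rw [integral_map hm.aemeasurable aestronglyMeasurable_id]
    rfl
  rw [h1, h]
  have : ∫ x in Icc (0:ℝ) 1, x = 1 / 2 := by
    rw [MeasureTheory.integral_Icc_eq_integral_Ioc,
      ← intervalIntegral.integral_of_le (by norm_num : (0:ℝ) ≤ 1)]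
    rw [integral_id]
    norm_num
  simpa using this

/-- SLLN for an injectively reindexed iid uniform family. -/
lemma slln_reindex {Ω : Type*} [MeasurableSpace Ω] (P : Measure Ω) [IsProbabilityMeasure P]
    (η : ℤ → Ω → ℝ) (hmeas : ∀ u, Measurable (η u))
    (hindep : iIndepFun η P)
    (hunif : ∀ u, Measure.map (η u) P = volume.restrict (Icc (0:ℝ) 1))
    (g : ℕ → ℤ) (hg : Function.Injective g) :
    ∀ᵐ ω ∂P, Tendsto (fun n : ℕ => (∑ i ∈ Finset.range n, η (g i) ω) / n)
      atTop (nhds (1 / 2)) := by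
  have key := strong_law_ae_real (μ := P) (fun i => η (g i))
    (unif_integrable (hmeas (g 0)) (hunif (g 0)))
    (fun i j hij => hindep.indepFun (hg.ne hij))
    (fun i => ⟨(hmeas (g i)).aemeasurable, (hmeas (g 0)).aemeasurable, by
      rw [hunif, hunif]⟩)
  have hE : ∫ ω, η (g 0) ω ∂P = 1 / 2 := unif_integral (hmeas (g 0)) (hunif (g 0))
  filter_upwards [key] with ω hω
  rw [hE] at hω
  exact hω

/-- Consecutive `Ioc` sums over `ℤ`. -/
lemma sum_Ioc_consecutive_int (f : ℤ → ℝ) {a b c : ℤ} (h1 : a ≤ b) (h2 : b ≤ c) :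
    (∑ u ∈ Finset.Ioc a b, f u) + (∑ u ∈ Finset.Ioc b c, f u) = ∑ u ∈ Finset.Ioc a c, f u := by
  have hd : Disjoint (Finset.Ioc a b) (Finset.Ioc b c) := by
    rw [Finset.disjoint_left]
    intro x hx1 hx2
    rw [Finset.mem_Ioc] at hx1 hx2
    omega
  rw [← Finset.sum_union hd, Finset.Ioc_union_Ioc_eq_Ioc h1 h2]

set_option maxHeartbeats 1000000 in
theorem two_sided_flat_positive_prob
    {Ω : Type*} [MeasurableSpace Ω] (P : Measure Ω) [IsProbabilityMeasure P]
    (η : ℤ → Ω → ℝ) (hmeas : ∀ u, Measurable (η u))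
    (hindep : iIndepFun η P)
    (hunif : ∀ u, Measure.map (η u) P = volume.restrict (Icc (0:ℝ) 1))
    (ε : ℝ) (hε : 0 < ε) (v : ℤ) :
    0 < P {ω | ∀ m n : ℕ,
        (∑ u ∈ Finset.Icc (v - m) (v + n), η u ω) / (m + n + 1)
          ∈ Icc (1/2 - ε) (1/2 + ε)} := by
  classical
  set ε' : ℝ := min (ε/4) (1/4) with hepsdef
  have hε'pos : 0 < ε' := lt_min (by linarith) (by norm_num)
  have hε'le : ε' ≤ ε/4 := min_le_left _ _
  have hε'le4 : ε' ≤ 1/4 := min_le_right _ _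
  set gR : ℕ → ℤ := fun k => v + 1 + (k : ℤ) with hgRdef
  set gL : ℕ → ℤ := fun k => v - 1 - (k : ℤ) with hgLdef
  have hgRinj : Function.Injective gR := fun a b h => by
    simp only [hgRdef] at h; omega
  have hgLinj : Function.Injective gL := fun a b h => by
    simp only [hgLdef] at h; omega
  -- tail flatness events
  set E : (ℕ → ℤ) → ℕ → Set Ω := fun g K =>
    ⋂ (j : ℕ) (n : ℕ) (_ : K ≤ j) (_ : j < n),
      {ω | |∑ k ∈ Finset.Ico j n, (η (g k) ω - 1/2)| ≤ ε/4 * ((n : ℝ) + 1)} with hEdef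
  have hmemE : ∀ g K ω, ω ∈ E g K ↔ ∀ j, K ≤ j → ∀ n, j < n →
      |∑ k ∈ Finset.Ico j n, (η (g k) ω - 1/2)| ≤ ε/4 * ((n : ℝ) + 1) := by
    intro g K ω
    simp only [hEdef, Set.mem_iInter, Set.mem_setOf_eq]
    exact ⟨fun h j hj n hn => h j n hj hn, fun h j n hj hn => h j hj n hn⟩
  -- a.s. statement for each side
  have haeside : ∀ g : ℕ → ℤ, Function.Injective g →
      ∀ᵐ ω ∂P, ∃ K : ℕ, ω ∈ E g K := by
    intro g hg
    filter_upwards [slln_reindex P η hmeas hindep hunif g hg] with ω hω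
    set T : ℕ → ℝ := fun n => ∑ k ∈ Finset.range n, (η (g k) ω - 1/2) with hTdef
    have hTn : ∀ n : ℕ, T n = (∑ k ∈ Finset.range n, η (g k) ω) - (n : ℝ) * (1/2) := by
      intro n
      simp [hTdef, Finset.sum_sub_distrib]
    have hT : Tendsto (fun n : ℕ => T n / n) atTop (nhds 0) := by
      have heq : (fun n : ℕ => T n / n) =ᶠ[atTop]
          fun n : ℕ => (∑ k ∈ Finset.range n, η (g k) ω) / n - 1/2 := by
        filter_upwards [eventually_ge_atTop 1] with n hn
        have hn' : (n:ℝ) ≠ 0 := by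
          have h1 : (1:ℝ) ≤ (n:ℝ) := by exact_mod_cast hn
          linarith
        rw [hTn, sub_div, mul_comm, mul_div_assoc, div_self hn', mul_one]
      rw [tendsto_congr' heq]
      have hconv := hω.sub (tendsto_const_nhds (x := (1/2 : ℝ)))
      simpa using hconv
    obtain ⟨K, hK⟩ := tail_flat_of_tendsto T (ε/4) (by linarith) hT
    refine ⟨K, (hmemE g K ω).2 fun j hj n hn => ?_⟩
    have h1 := hK j hj n hn
    have h2 : ∑ k ∈ Finset.Ico j n, (η (g k) ω - 1/2) = T n - T j :=
      Finset.sum_Ico_eq_sub _ (le_of_lt hn)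
    rw [h2]
    exact h1
  -- E is monotone in K
  have hEmono : ∀ g, Monotone (E g) := by
    intro g K1 K2 hK12
    intro ω hω
    rw [hmemE] at hω ⊢
    exact fun j hj n hn => hω j (le_trans hK12 hj) n hn
  set G : ℕ → Set Ω := fun K => E gR K ∩ E gL K with hGdef
  -- measurability helper
  have hEmeas : ∀ (m' : MeasurableSpace Ω) (g : ℕ → ℤ) (K : ℕ),
      (∀ k : ℕ, K ≤ k → MeasurableSpace.comap (η (g k)) inferInstance ≤ m') →
      MeasurableSet[m'] (E g K) := by
    intro m' g K hm'
    refine MeasurableSet.iInter fun j => MeasurableSet.iInter fun n =>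
      MeasurableSet.iInter fun hj => MeasurableSet.iInter fun hn => ?_
    have hsum : Measurable[m'] fun ω => ∑ k ∈ Finset.Ico j n, (η (g k) ω - 1/2) := by
      refine Finset.measurable_sum _ fun k hk => ?_
      have hk' : K ≤ k := le_trans hj (Finset.mem_Ico.1 hk).1
      exact (measurable_iff_comap_le.2 (hm' k hk')).sub measurable_const
    exact measurableSet_le hsum.abs measurable_const
  have hGmeas : ∀ K, MeasurableSet (G K) := fun K =>
    (hEmeas _ gR K (fun k _ => (hmeas _).comap_le)).inter
      (hEmeas _ gL K (fun k _ => (hmeas _).comap_le))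
  -- a.s. in the union
  have hU : ∀ᵐ ω ∂P, ω ∈ ⋃ K, G K := by
    filter_upwards [haeside gR hgRinj, haeside gL hgLinj] with ω h1 h2
    obtain ⟨K1, hK1⟩ := h1
    obtain ⟨K2, hK2⟩ := h2
    exact Set.mem_iUnion.2 ⟨max K1 K2,
      hEmono gR (le_max_left _ _) hK1, hEmono gL (le_max_right _ _) hK2⟩
  have hPU : P (⋃ K, G K) = 1 := by
    rw [← prob_compl_eq_zero_iff (MeasurableSet.iUnion hGmeas)]
    rw [ae_iff] at hU
    convert hU using 2
    rfl
  have hexK : ∃ K, P (G K) ≠ 0 := by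
    by_contra hcon
    push_neg at hcon
    have h0 : P (⋃ K, G K) = 0 := measure_iUnion_null hcon
    rw [hPU] at h0
    exact one_ne_zero h0
  obtain ⟨K, hKpos⟩ := hexK
  -- central event
  set sB : ℤ → Set Ω := fun u => (η u) ⁻¹' (Set.Icc (1/2 - ε') (1/2 + ε')) with hsBdef
  set B : Set Ω := ⋂ u ∈ Finset.Icc (v - (K:ℤ)) (v + (K:ℤ)), sB u with hBdef
  -- independence of B and G K
  set S : Set ℤ := Set.Icc (v - (K:ℤ)) (v + (K:ℤ)) with hSdef
  have hInd : Indep (⨆ u ∈ S, MeasurableSpace.comap (η u) inferInstance)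
      (⨆ u ∈ Sᶜ, MeasurableSpace.comap (η u) inferInstance) P :=
    indep_biSup_compl (fun u => (hmeas u).comap_le) hindep.iIndep S
  have hBmeas' : MeasurableSet[⨆ u ∈ S, MeasurableSpace.comap (η u) inferInstance] B := by
    refine MeasurableSet.biInter (Finset.Icc _ _).countable_toSet fun u hu => ?_
    have h1 : MeasurableSet[MeasurableSpace.comap (η u) inferInstance] (sB u) :=
      ⟨_, measurableSet_Icc, rfl⟩
    have huS : u ∈ S := by
      rw [hSdef, Set.mem_Icc]
      exact Finset.mem_Icc.1 hu
    exact le_biSup (fun u => MeasurableSpace.comap (η u) inferInstance) huS _ h1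
  have hGmeas' : MeasurableSet[⨆ u ∈ Sᶜ, MeasurableSpace.comap (η u) inferInstance] (G K) := by
    refine MeasurableSet.inter (hEmeas _ gR K fun k hk => ?_) (hEmeas _ gL K fun k hk => ?_)
    · refine le_biSup (fun u => MeasurableSpace.comap (η u) inferInstance) ?_
      simp only [hSdef, Set.mem_compl_iff, Set.mem_Icc, hgRdef, not_and, not_le]
      intro _
      omega
    · refine le_biSup (fun u => MeasurableSpace.comap (η u) inferInstance) ?_
      simp only [hSdef, Set.mem_compl_iff, Set.mem_Icc, hgLdef, not_and, not_le]
      intro h1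
      omega
  have hmul : P (B ∩ G K) = P B * P (G K) :=
    (Indep_iff _ _ _).1 hInd B (G K) hBmeas' hGmeas'
  -- P B > 0
  have hBprod : P B = ∏ u ∈ Finset.Icc (v - (K:ℤ)) (v + (K:ℤ)), P (sB u) :=
    hindep.meas_biInter (fun u hu => ⟨_, measurableSet_Icc, rfl⟩)
  have hfac : ∀ u : ℤ, P (sB u) = ENNReal.ofReal (2 * ε') := by
    intro u
    have h1 : P (sB u) = Measure.map (η u) P (Set.Icc (1/2 - ε') (1/2 + ε')) :=
      (Measure.map_apply (hmeas u) measurableSet_Icc).symm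
    rw [h1, hunif, Measure.restrict_apply measurableSet_Icc]
    have hsub2 : Set.Icc (1/2 - ε') (1/2 + ε') ∩ Set.Icc (0:ℝ) 1
        = Set.Icc (1/2 - ε') (1/2 + ε') := by
      rw [Set.inter_eq_left]
      exact Set.Icc_subset_Icc (by linarith) (by linarith)
    rw [hsub2, Real.volume_Icc]
    congr 1
    ring
  have hBne : P B ≠ 0 := by
    rw [hBprod]
    rw [Finset.prod_ne_zero_iff]
    intro u hu
    rw [hfac u]
    simp only [ne_eq, ENNReal.ofReal_eq_zero, not_le]
    linarith
  -- the inclusion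
  have hsub : B ∩ G K ⊆ {ω | ∀ m n : ℕ,
      (∑ u ∈ Finset.Icc (v - m) (v + n), η u ω) / (m + n + 1)
        ∈ Set.Icc (1/2 - ε) (1/2 + ε)} := by
    rintro ω ⟨hB, hGR, hGL⟩
    have hBmem : ∀ u : ℤ, v - K ≤ u → u ≤ v + K → |η u ω - 1/2| ≤ ε' := by
      intro u h1 h2
      have hmem := Set.mem_iInter₂.1 hB u (Finset.mem_Icc.2 ⟨h1, h2⟩)
      rw [hsBdef] at hmem
      simp only [Set.mem_preimage, Set.mem_Icc] at hmem
      rw [abs_le]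
      constructor <;> linarith [hmem.1, hmem.2]
    have hR := (hmemE gR K ω).1 hGR
    have hL := (hmemE gL K ω).1 hGL
    intro m n
    set m' : ℕ := min m K with hm'def
    set n' : ℕ := min n K with hn'def
    have hm'm : m' ≤ m := min_le_left _ _
    have hm'K : m' ≤ K := min_le_right _ _
    have hn'n : n' ≤ n := min_le_left _ _
    have hn'K : n' ≤ K := min_le_right _ _
    set d : ℤ → ℝ := fun u => η u ω - 1/2 with hddef
    have hIccIoc : Finset.Icc (v - (m:ℤ)) (v + (n:ℤ)) = Finset.Ioc (v - m - 1) (v + n) := by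
      ext x
      simp only [Finset.mem_Icc, Finset.mem_Ioc]
      omega
    have hsplit1 : (∑ u ∈ Finset.Ioc (v - (m:ℤ) - 1) (v - m' - 1), d u)
        + (∑ u ∈ Finset.Ioc (v - (m':ℤ) - 1) (v + n), d u)
        = ∑ u ∈ Finset.Ioc (v - (m:ℤ) - 1) (v + n), d u :=
      sum_Ioc_consecutive_int d (show v - (m:ℤ) - 1 ≤ v - (m':ℤ) - 1 by omega)
        (show v - (m':ℤ) - 1 ≤ v + (n:ℤ) by omega)
    have hsplit2 : (∑ u ∈ Finset.Ioc (v - (m':ℤ) - 1) (v + n'), d u)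
        + (∑ u ∈ Finset.Ioc (v + (n':ℤ)) (v + n), d u)
        = ∑ u ∈ Finset.Ioc (v - (m':ℤ) - 1) (v + n), d u :=
      sum_Ioc_consecutive_int d (show v - (m':ℤ) - 1 ≤ v + (n':ℤ) by omega)
        (show v + (n':ℤ) ≤ v + (n:ℤ) by omega)
    -- middle bound
    have hmidIcc : Finset.Ioc (v - (m':ℤ) - 1) (v + n') = Finset.Icc (v - m') (v + n') := by
      ext x
      simp only [Finset.mem_Icc, Finset.mem_Ioc]
      omega
    have hmid : |∑ u ∈ Finset.Ioc (v - (m':ℤ) - 1) (v + n'), d u|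
        ≤ ε/4 * ((m:ℝ) + n + 1) := by
      rw [hmidIcc]
      have hcard : (Finset.Icc (v - (m':ℤ)) (v + n')).card = m' + n' + 1 := by
        rw [Int.card_Icc]
        omega
      calc |∑ u ∈ Finset.Icc (v - (m':ℤ)) (v + n'), d u|
          ≤ ∑ u ∈ Finset.Icc (v - (m':ℤ)) (v + n'), |d u| :=
            Finset.abs_sum_le_sum_abs _ _
        _ ≤ ∑ u ∈ Finset.Icc (v - (m':ℤ)) (v + n'), ε' := by
            refine Finset.sum_le_sum fun u hu => ?_
            rw [Finset.mem_Icc] at hu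
            exact hBmem u (by omega) (by omega)
        _ = ((m' : ℝ) + n' + 1) * ε' := by
            rw [Finset.sum_const, hcard, nsmul_eq_mul]
            push_cast
            ring
        _ ≤ ε/4 * ((m:ℝ) + n + 1) := by
            have c1 : (m' : ℝ) ≤ m := by exact_mod_cast hm'm
            have c2 : (n' : ℝ) ≤ n := by exact_mod_cast hn'n
            have c3 : (0:ℝ) ≤ (m' : ℝ) + n' + 1 := by positivity
            nlinarith
    -- right bound
    have hright : |∑ u ∈ Finset.Ioc (v + (n':ℤ)) (v + n), d u| ≤ ε/4 * ((n:ℝ) + 1) := by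
      rcases le_or_gt n K with hcase | hcase
      · have hnn : n' = n := min_eq_left hcase
        rw [hnn]
        simp only [Finset.Ioc_self, Finset.sum_empty, abs_zero]
        positivity
      · have hnK : n' = K := min_eq_right hcase.le
        rw [hnK]
        have hre : ∑ u ∈ Finset.Ioc (v + (K:ℤ)) (v + n), d u
            = ∑ k ∈ Finset.Ico K n, (η (gR k) ω - 1/2) := by
          refine (Finset.sum_nbij' (fun k : ℕ => v + 1 + (k:ℤ))
            (fun u : ℤ => (u - v - 1).toNat) ?_ ?_ ?_ ?_ ?_).symm
          · intro k hk
            simp only [Finset.mem_Ico] at hk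
            simp only [Finset.mem_Ioc]
            omega
          · intro u hu
            simp only [Finset.mem_Ioc] at hu
            simp only [Finset.mem_Ico]
            omega
          · intro k hk
            omega
          · intro u hu
            simp only [Finset.mem_Ioc] at hu
            omega
          · intro k hk
            rfl
        rw [hre]
        exact hR K le_rfl n hcase
    -- left bound
    have hleft : |∑ u ∈ Finset.Ioc (v - (m:ℤ) - 1) (v - m' - 1), d u|
        ≤ ε/4 * ((m:ℝ) + 1) := by
      rcases le_or_gt m K with hcase | hcase
      · have hmm : m' = m := min_eq_left hcase
        rw [hmm]
        simp only [Finset.Ioc_self, Finset.sum_empty, abs_zero]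
        positivity
      · have hmK : m' = K := min_eq_right hcase.le
        rw [hmK]
        have hre : ∑ u ∈ Finset.Ioc (v - (m:ℤ) - 1) (v - K - 1), d u
            = ∑ k ∈ Finset.Ico K m, (η (gL k) ω - 1/2) := by
          refine (Finset.sum_nbij' (fun k : ℕ => v - 1 - (k:ℤ))
            (fun u : ℤ => (v - 1 - u).toNat) ?_ ?_ ?_ ?_ ?_).symm
          · intro k hk
            simp only [Finset.mem_Ico] at hk
            simp only [Finset.mem_Ioc]
            omega
          · intro u hu
            simp only [Finset.mem_Ioc] at hu
            simp only [Finset.mem_Ico]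
            omega
          · intro k hk
            omega
          · intro u hu
            simp only [Finset.mem_Ioc] at hu
            omega
          · intro k hk
            rfl
        rw [hre]
        exact hL K le_rfl m hcase
    have hD : |∑ u ∈ Finset.Icc (v - (m:ℤ)) (v + (n:ℤ)), d u| ≤ ε * ((m:ℝ) + n + 1) := by
      rw [hIccIoc, ← hsplit1, ← hsplit2]
      have htri : |(∑ u ∈ Finset.Ioc (v - (m:ℤ) - 1) (v - m' - 1), d u)
          + ((∑ u ∈ Finset.Ioc (v - (m':ℤ) - 1) (v + n'), d u)
            + (∑ u ∈ Finset.Ioc (v + (n':ℤ)) (v + n), d u))|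
          ≤ |∑ u ∈ Finset.Ioc (v - (m:ℤ) - 1) (v - m' - 1), d u|
            + (|∑ u ∈ Finset.Ioc (v - (m':ℤ) - 1) (v + n'), d u|
              + |∑ u ∈ Finset.Ioc (v + (n':ℤ)) (v + n), d u|) :=
        le_trans (abs_add_le _ _) (by gcongr; exact abs_add_le _ _)
      have hm0 : (0:ℝ) ≤ (m:ℝ) := Nat.cast_nonneg m
      have hn0 : (0:ℝ) ≤ (n:ℝ) := Nat.cast_nonneg n
      nlinarith [hmid, hright, hleft]
    have hcard2 : (Finset.Icc (v - (m:ℤ)) (v + (n:ℤ))).card = m + n + 1 := by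
      rw [Int.card_Icc]
      omega
    have hsum2 : ∑ u ∈ Finset.Icc (v - (m:ℤ)) (v + (n:ℤ)), η u ω
        = (∑ u ∈ Finset.Icc (v - (m:ℤ)) (v + (n:ℤ)), d u) + ((m:ℝ) + n + 1) * (1/2) := by
      rw [hddef]
      rw [Finset.sum_sub_distrib, Finset.sum_const, hcard2, nsmul_eq_mul]
      push_cast
      ring
    have hW : (0:ℝ) < (m:ℝ) + n + 1 := by positivity
    rw [Set.mem_Icc]
    rw [abs_le] at hD
    constructor
    · rw [le_div_iff₀ hW]
      nlinarith [hD.1, hsum2]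
    · rw [div_le_iff₀ hW]
      nlinarith [hD.2, hsum2]
  calc (0:ENNReal) < P B * P (G K) := ENNReal.mul_pos hBne hKpos
    _ = P (B ∩ G K) := hmul.symm
    _ ≤ P _ := measure_mono hsub
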